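/- arXiv:2506.19321 — 2 statements merged into one kernel-verified Lean document; each statement's English description precedes it below -/
import Mathlib

section
/- Fix an integer n ≥ 1, a mass m > 0, and an adiabatic exponent γ with 1 < γ < (n+2)/n; let M[N,u] be the truncated Maxwellian and h the kinetic entropy. Then for every N ≥ 0 and every u ∈ ℝⁿ, ∫_{ℝⁿ} h(M[N,u](v), v) dv = (m/2) N |u|² + m^{n(γ−1)/2} N^{γ}/(γ−1). -/
open MeasureTheory

/-- The exponent `d = 2/(γ−1) − n`. -/
noncomputable def dExp (n : ℕ) (γ : ℝ) : ℝ := 2 / (γ - 1) - n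

/-- The normalization constant
`c = (2γ/(γ−1))^{−1/(γ−1)} Γ(γ/(γ−1)) / (π^{n/2} Γ(d/2 + 1))`. -/
noncomputable def cNorm (n : ℕ) (γ : ℝ) : ℝ :=
  (2 * γ / (γ - 1)) ^ (-(1 / (γ - 1))) * Real.Gamma (γ / (γ - 1)) /
    (Real.pi ^ ((n : ℝ) / 2) * Real.Gamma (dExp n γ / 2 + 1))

/-- The truncated Maxwellian
`M[N,u](v) = c (m^{n(γ−1)/2} (2γ/(γ−1)) N^{γ−1} − m|v−u|²)₊^{d/2}`. -/
noncomputable def maxwellian (n : ℕ) (m γ : ℝ) (N : ℝ) (u v : EuclideanSpace ℝ (Fin n)) : ℝ :=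
  cNorm n γ *
    (max (m ^ ((n : ℝ) * (γ - 1) / 2) * (2 * γ / (γ - 1)) * N ^ (γ - 1)
        - m * ‖v - u‖ ^ 2) 0) ^ (dExp n γ / 2)

/-- The kinetic entropy `h(g,v) = (m/2)|v|² g + (1/(2 c^{2/d})) g^{1+2/d}/(1+2/d)`. -/
noncomputable def kinEntropy (n : ℕ) (m γ : ℝ) (g : ℝ) (v : EuclideanSpace ℝ (Fin n)) : ℝ :=
  m / 2 * ‖v‖ ^ 2 * g +
    1 / (2 * cNorm n γ ^ (2 / dExp n γ)) * (g ^ (1 + 2 / dExp n γ) / (1 + 2 / dExp n γ))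

open Set

/-- Real Beta integral in terms of the Gamma function. -/
lemma mwAux_real_beta {s t : ℝ} (hs : 0 < s) (ht : 0 < t) :
    ∫ x in (0:ℝ)..1, x ^ (s-1) * (1-x) ^ (t-1) =
      Real.Gamma s * Real.Gamma t / Real.Gamma (s + t) := by
  have h := Complex.Gamma_mul_Gamma_eq_betaIntegral (s := (s:ℂ)) (t := (t:ℂ))
    (by simpa using hs) (by simpa using ht)
  have hb : Complex.betaIntegral s t =
      ((∫ x in (0:ℝ)..1, x ^ (s-1) * (1-x) ^ (t-1) : ℝ) : ℂ) := by
    rw [Complex.betaIntegral, ← intervalIntegral.integral_ofReal]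
    refine intervalIntegral.integral_congr fun x hx => ?_
    rw [Set.uIcc_of_le (by norm_num : (0:ℝ) ≤ 1)] at hx
    push_cast
    rw [Complex.ofReal_cpow hx.1, Complex.ofReal_cpow (by linarith [hx.2])]
    push_cast
    ring
  rw [hb, ← Complex.ofReal_add, Complex.Gamma_ofReal, Complex.Gamma_ofReal,
    Complex.Gamma_ofReal, ← Complex.ofReal_mul, ← Complex.ofReal_mul] at h
  have := Complex.ofReal_injective h
  rw [this]
  have hG : Real.Gamma (s + t) ≠ 0 := (Real.Gamma_pos_of_pos (by linarith)).ne'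
  field_simp

lemma mwAux_radial_1d {n : ℕ} (hn : 1 ≤ n) {p : ℝ} (hp : 0 < p) :
    ∫ r in Ioi (0:ℝ), r ^ (n-1) * (max (1 - r^2) 0) ^ p =
      Real.Gamma ((n:ℝ)/2) * Real.Gamma (p+1) / (2 * Real.Gamma ((n:ℝ)/2 + (p+1))) := by
  set f : ℝ → ℝ := fun r => r ^ (n-1) * (max (1 - r^2) 0) ^ p with hfdef
  have h1 : ∫ r in Ioi (0:ℝ), f r = ∫ r in Ioo (0:ℝ) 1, f r := by
    refine setIntegral_eq_of_subset_of_forall_diff_eq_zero measurableSet_Ioi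
      Ioo_subset_Ioi_self fun x hx => ?_
    have hx1 : (1:ℝ) ≤ x := by
      rcases hx with ⟨hx0, hx1⟩
      by_contra hc
      exact hx1 ⟨hx0, lt_of_not_ge hc⟩
    have hm : max (1 - x^2) 0 = 0 := max_eq_right (by nlinarith)
    simp only [hfdef, hm, Real.zero_rpow hp.ne', mul_zero]
  set g : ℝ → ℝ := fun x => x ^ ((n:ℝ)/2 - 1) * (1-x) ^ p with hgdef
  have himg : (fun r : ℝ => r^2) '' Ioo 0 1 = Ioo 0 1 := by
    ext x
    simp only [mem_image, mem_Ioo]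
    constructor
    · rintro ⟨r, hr, rfl⟩; constructor <;> nlinarith [hr.1, hr.2]
    · rintro ⟨hx0, hx1⟩
      exact ⟨Real.sqrt x, ⟨Real.sqrt_pos.mpr hx0,
        (Real.sqrt_lt' one_pos).mpr (by nlinarith)⟩, Real.sq_sqrt hx0.le⟩
  have key : ∫ x in Ioo (0:ℝ) 1, g x
      = ∫ r in Ioo (0:ℝ) 1, |2*r| • g (r^2) := by
    conv_lhs => rw [← himg]
    exact integral_image_eq_integral_abs_deriv_smul measurableSet_Ioo
      (fun x _ => by simpa using (hasDerivAt_pow 2 x).hasDerivWithinAt)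
      (fun x hx y hy hxy => by nlinarith [hx.1, hy.1]) g
  have hgf : ∀ r ∈ Ioo (0:ℝ) 1, |2*r| • g (r^2) = 2 * f r := by
    intro r hr
    have hr0 : 0 < r := hr.1
    have hr2 : (0:ℝ) < 1 - r^2 := by nlinarith [hr.2]
    have hmax : max (1 - r^2) 0 = 1 - r^2 := max_eq_left hr2.le
    have hrp : (r^2 : ℝ) ^ ((n:ℝ)/2 - 1) = r ^ ((n:ℝ) - 2) := by
      rw [← Real.rpow_natCast r 2, ← Real.rpow_mul hr0.le]
      congr 1
      push_cast
      ring
    have hrn : r * r ^ ((n:ℝ) - 2) = r ^ (n-1) := by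
      have e1 : (r:ℝ) ^ (n-1) = r ^ ((n:ℝ)-1) := by
        rw [← Real.rpow_natCast r (n-1)]
        congr 1
        push_cast [Nat.cast_sub hn]
        ring
      have e2 : (n:ℝ) - 1 = 1 + ((n:ℝ)-2) := by ring
      rw [e1, e2, Real.rpow_add hr0, Real.rpow_one]
    simp only [hgdef, hfdef, hmax, hrp, smul_eq_mul,
      abs_of_pos (by linarith : (0:ℝ) < 2*r)]
    rw [← hrn]
    ring
  have h2 : ∫ r in Ioo (0:ℝ) 1, |2*r| • g (r^2) = 2 * ∫ r in Ioo (0:ℝ) 1, f r := by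
    rw [← MeasureTheory.integral_const_mul]
    exact setIntegral_congr_fun measurableSet_Ioo hgf
  have hbeta : ∫ x in Ioo (0:ℝ) 1, g x =
      Real.Gamma ((n:ℝ)/2) * Real.Gamma (p+1) / Real.Gamma ((n:ℝ)/2 + (p+1)) := by
    have hs : 0 < (n:ℝ)/2 := by positivity
    have hrb := mwAux_real_beta hs (by linarith : (0:ℝ) < p+1)
    rw [intervalIntegral.integral_of_le (by norm_num : (0:ℝ) ≤ 1),
      integral_Ioc_eq_integral_Ioo] at hrb
    simpa [hgdef] using hrb
  rw [h1]
  have : ∫ r in Ioo (0:ℝ) 1, f r = (∫ x in Ioo (0:ℝ) 1, g x) / 2 := by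
    rw [hbeta] at key ⊢
    rw [h2] at key
    linarith
  rw [this, hbeta]
  ring

lemma mwAux_unit_ball_integral {n : ℕ} (hn : 1 ≤ n) {p : ℝ} (hp : 0 < p) :
    ∫ x : EuclideanSpace ℝ (Fin n), (max (1 - ‖x‖^2) 0) ^ p
      = Real.pi ^ ((n:ℝ)/2) * Real.Gamma (p+1) / Real.Gamma ((n:ℝ)/2 + (p+1)) := by
  haveI : Nontrivial (EuclideanSpace ℝ (Fin n)) :=
    Module.nontrivial_of_finrank_pos (R := ℝ)
      (by rw [finrank_euclideanSpace_fin]; omega)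
  have hpolar := MeasureTheory.integral_fun_norm_addHaar
    (volume : Measure (EuclideanSpace ℝ (Fin n)))
    (fun y : ℝ => (max (1 - y^2) 0) ^ p)
  rw [finrank_euclideanSpace_fin] at hpolar
  rw [hpolar]
  haveI : Nonempty (Fin n) := Fin.pos_iff_nonempty.mp (by omega)
  have hvol : (volume (Metric.ball (0 : EuclideanSpace ℝ (Fin n)) 1)).toReal
      = Real.sqrt Real.pi ^ n / Real.Gamma ((n:ℝ)/2 + 1) := by
    rw [EuclideanSpace.volume_ball]
    simp only [Fintype.card_fin, ENNReal.one_rpow]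
    rw [ENNReal.toReal_mul]
    have : ((ENNReal.ofReal 1) ^ n).toReal = 1 := by simp
    rw [this, one_mul, ENNReal.toReal_ofReal (by positivity)]
  rw [measureReal_def, hvol, nsmul_eq_mul, smul_eq_mul]
  have hint : (∫ y in Ioi (0:ℝ), y ^ (n-1) • (max (1 - y^2) 0) ^ p)
      = Real.Gamma ((n:ℝ)/2) * Real.Gamma (p+1) / (2 * Real.Gamma ((n:ℝ)/2 + (p+1))) := by
    rw [← mwAux_radial_1d hn hp]
    simp [smul_eq_mul]
  rw [hint]
  have hsq : Real.sqrt Real.pi ^ n = Real.pi ^ ((n:ℝ)/2) := by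
    rw [Real.sqrt_eq_rpow, ← Real.rpow_natCast (Real.pi ^ ((1:ℝ)/2)) n,
      ← Real.rpow_mul Real.pi_nonneg]
    congr 1
    ring
  rw [hsq]
  have hn2 : ((n:ℝ)/2) ≠ 0 := by positivity
  have hgadd : Real.Gamma ((n:ℝ)/2 + 1) = ((n:ℝ)/2) * Real.Gamma ((n:ℝ)/2) :=
    Real.Gamma_add_one hn2
  rw [hgadd]
  have hg1 : Real.Gamma ((n:ℝ)/2) ≠ 0 := (Real.Gamma_pos_of_pos (by positivity)).ne'
  have hg2 : Real.Gamma ((n:ℝ)/2 + (p+1)) ≠ 0 :=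
    (Real.Gamma_pos_of_pos (by positivity)).ne'
  have hnne : (n:ℝ) ≠ 0 := by positivity
  field_simp

lemma mwAux_scaled_integral {n : ℕ} (hn : 1 ≤ n) {m A p : ℝ} (hm : 0 < m) (hA : 0 < A)
    (hp : 0 < p) (u : EuclideanSpace ℝ (Fin n)) :
    ∫ v : EuclideanSpace ℝ (Fin n), (max (A - m * ‖v - u‖^2) 0) ^ p
      = m ^ (-((n:ℝ)/2)) * A ^ (p + (n:ℝ)/2) *
        (Real.pi ^ ((n:ℝ)/2) * Real.Gamma (p+1) / Real.Gamma ((n:ℝ)/2 + (p+1))) := by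
  set F : EuclideanSpace ℝ (Fin n) → ℝ := fun w => (max (A - m * ‖w‖^2) 0) ^ p with hF
  have htrans : ∫ v : EuclideanSpace ℝ (Fin n), (max (A - m * ‖v - u‖^2) 0) ^ p
      = ∫ w, F w := integral_sub_right_eq_self F u
  rw [htrans]
  set R : ℝ := Real.sqrt (A / m) with hR
  have hRpos : 0 < R := Real.sqrt_pos.mpr (by positivity)
  have hR2 : R ^ 2 = A / m := Real.sq_sqrt (by positivity)
  have hscale := MeasureTheory.Measure.integral_comp_smul_of_nonneg
    (volume : Measure (EuclideanSpace ℝ (Fin n))) F R (hR := hRpos.le)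
  rw [finrank_euclideanSpace_fin] at hscale
  have hFR : ∀ x : EuclideanSpace ℝ (Fin n), F (R • x) = A ^ p * (max (1 - ‖x‖^2) 0) ^ p := by
    intro x
    have hnorm : ‖R • x‖ ^ 2 = (A/m) * ‖x‖^2 := by
      rw [norm_smul, mul_pow, ← hR2]
      simp [abs_of_pos hRpos]
    have harg : A - m * ‖R • x‖^2 = A * (1 - ‖x‖^2) := by
      rw [hnorm]
      field_simp
    rw [hF]
    simp only [harg]
    rw [← Real.mul_rpow hA.le (le_max_right _ _)]
    congr 1
    rw [mul_max_of_nonneg _ _ hA.le, mul_zero]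
  rw [funext hFR, MeasureTheory.integral_const_mul, smul_eq_mul] at hscale
  have hJ := mwAux_unit_ball_integral hn hp
  have : ∫ w, F w = R ^ n * (A ^ p * ∫ x : EuclideanSpace ℝ (Fin n), (max (1 - ‖x‖^2) 0) ^ p) := by
    have hRn0 : (R:ℝ) ^ n ≠ 0 := by positivity
    rw [hscale]
    field_simp
  rw [this, hJ]
  have hRn : R ^ n = m ^ (-((n:ℝ)/2)) * A ^ ((n:ℝ)/2) := by
    rw [hR, Real.sqrt_eq_rpow, ← Real.rpow_natCast ((A/m) ^ ((1:ℝ)/2)) n,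
      ← Real.rpow_mul (by positivity), Real.div_rpow hA.le hm.le,
      Real.rpow_neg hm.le, div_eq_mul_inv]
    ring_nf
  rw [hRn]
  rw [Real.rpow_add hA]
  ring

lemma mwAux_contCS {n : ℕ} {m A p : ℝ} (hm : 0 < m) (hA : 0 < A) (hp : 0 < p)
    (u : EuclideanSpace ℝ (Fin n)) :
    Continuous (fun v : EuclideanSpace ℝ (Fin n) => (max (A - m * ‖v - u‖^2) 0) ^ p) ∧
    HasCompactSupport
      (fun v : EuclideanSpace ℝ (Fin n) => (max (A - m * ‖v - u‖^2) 0) ^ p) := by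
  have hrp : Continuous (fun x : ℝ => x ^ p) :=
    continuous_iff_continuousAt.mpr fun x => Real.continuousAt_rpow_const x p (Or.inr hp.le)
  have hQ : Continuous (fun v : EuclideanSpace ℝ (Fin n) => max (A - m * ‖v-u‖^2) 0) :=
    (continuous_const.sub (continuous_const.mul
      (((continuous_id.sub continuous_const).norm).pow 2))).max continuous_const
  refine ⟨hrp.comp hQ, ?_⟩
  apply HasCompactSupport.intro (isCompact_closedBall u (Real.sqrt (A/m)))
  intro v hv
  simp only [Metric.mem_closedBall, not_le, dist_eq_norm] at hv
  have hle : A - m * ‖v-u‖^2 ≤ 0 := by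
    have h2 : A/m < ‖v-u‖^2 := by
      nlinarith [Real.sq_sqrt (le_of_lt (div_pos hA hm)), Real.sqrt_nonneg (A/m), hv]
    have := (div_lt_iff₀ hm).mp h2
    nlinarith
  show (max (A - m * ‖v - u‖^2) 0) ^ p = 0
  rw [max_eq_right hle, Real.zero_rpow hp.ne']


private lemma mwAux_alg1 (B B' q q' N P G1 G2 : ℝ) (hBB : B * B' = 1) (hqq : q * q' = 1)
    (hP : P ≠ 0) (hG1 : G1 ≠ 0) (hG2 : G2 ≠ 0) :
    B * G1 / (P * G2) * (q * (q' * B' * N) * (P * G2 / G1)) = N := by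
  field_simp
  linear_combination (N * q * q') * hBB + N * hqq

private lemma mwAux_alg2 (B B' q q' N P G1 G2 A K γ : ℝ) (hBB : B*B'=1) (hqq : q*q'=1)
    (hP : P ≠ 0) (hG1 : G1 ≠ 0) (hG2 : G2 ≠ 0) (hγ : γ ≠ 0) (hγ1 : γ - 1 ≠ 0) :
    B * G1 / (P * G2) * (q * (q' * B' * N * A) * (P * (K * G2) / (γ/(γ-1) * G1)))
      = N * A * K * (γ-1) / γ := by
  have hx : γ / (γ - 1) ≠ 0 := div_ne_zero hγ hγ1
  field_simp
  linear_combination (N*A*K*q*q') * hBB + (N*A*K) * hqq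


private lemma mwAux_e₁ (n : ℕ) {γ : ℝ} (h : γ - 1 ≠ 0) :
    dExp n γ/2 + (n:ℝ)/2 = 1/(γ-1) := by
  rw [dExp]; field_simp; ring

private lemma mwAux_e₂ (n : ℕ) {γ : ℝ} (h : γ - 1 ≠ 0) :
    (n:ℝ)/2 + (dExp n γ/2 + 1) = γ/(γ-1) := by
  rw [dExp]; field_simp; ring

private lemma mwAux_e₃ (n : ℕ) {γ : ℝ} (h : γ - 1 ≠ 0) :
    (dExp n γ/2 + 1) + (n:ℝ)/2 = 1/(γ-1) + 1 := by
  rw [dExp]; field_simp; ring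

private lemma mwAux_e₄ (n : ℕ) {γ : ℝ} (h : γ - 1 ≠ 0) :
    (n:ℝ)/2 + ((dExp n γ/2 + 1) + 1) = γ/(γ-1) + 1 := by
  rw [dExp]; field_simp; ring

set_option maxHeartbeats 2000000 in
/-- For `n ≥ 1`, `m > 0`, `1 < γ < (n+2)/n`, every `N ≥ 0` and every `u ∈ ℝⁿ`,
the entropy of the truncated Maxwellian is
`∫_{ℝⁿ} h(M[N,u](v), v) dv = (m/2) N |u|² + m^{n(γ−1)/2} N^γ/(γ−1)`. -/
theorem maxwellian_entropy (n : ℕ) (hn : 1 ≤ n) (m γ : ℝ) (hm : 0 < m)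
    (hγ1 : 1 < γ) (hγ2 : γ < ((n : ℝ) + 2) / n) (N : ℝ) (hN : 0 ≤ N)
    (u : EuclideanSpace ℝ (Fin n)) :
    (∫ v : EuclideanSpace ℝ (Fin n), kinEntropy n m γ (maxwellian n m γ N u v) v) =
      m / 2 * N * ‖u‖ ^ 2 + m ^ ((n : ℝ) * (γ - 1) / 2) * N ^ γ / (γ - 1) := by
  have hγ' : (0:ℝ) < γ - 1 := by linarith
  have hn0 : (0:ℝ) < n := by exact_mod_cast Nat.pos_of_ne_zero (by omega)
  have hd : 0 < dExp n γ := by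
    have h1 : γ * n < n + 2 := by
      rw [lt_div_iff₀ hn0] at hγ2
      linarith
    rw [dExp, sub_pos, lt_div_iff₀ hγ']
    nlinarith
  set D := dExp n γ with hD
  have hD2 : 0 < D/2 := by linarith
  have hD21 : 0 < D/2 + 1 := by linarith
  have hbase : (0:ℝ) < 2 * γ / (γ - 1) := by
    apply div_pos <;> linarith
  have hγg : (0:ℝ) < γ / (γ - 1) := by
    apply div_pos <;> linarith
  have hc : 0 < cNorm n γ := by
    rw [cNorm]
    exact div_pos (mul_pos (Real.rpow_pos_of_pos hbase _) (Real.Gamma_pos_of_pos hγg))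
      (mul_pos (Real.rpow_pos_of_pos Real.pi_pos _)
        (Real.Gamma_pos_of_pos (by rw [← hD]; linarith)))
  set c := cNorm n γ with hcdef
  rcases eq_or_lt_of_le hN with hN0 | hNpos
  · -- case N = 0
    have hA0 : m ^ ((n : ℝ) * (γ - 1) / 2) * (2 * γ / (γ - 1)) * N ^ (γ - 1) = 0 := by
      rw [← hN0, Real.zero_rpow (by linarith : γ - 1 ≠ 0), mul_zero]
    have hM0 : ∀ v, maxwellian n m γ N u v = 0 := by
      intro v
      rw [maxwellian, hA0]
      have : max (0 - m * ‖v - u‖ ^ 2) 0 = 0 := by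
        apply max_eq_right
        have := sq_nonneg ‖v - u‖
        nlinarith
      rw [this, Real.zero_rpow (by rw [← hD]; linarith : dExp n γ / 2 ≠ 0), mul_zero]
    have hk0 : ∀ v : EuclideanSpace ℝ (Fin n), kinEntropy n m γ 0 v = 0 := by
      intro v
      rw [kinEntropy]
      have h2D : (0:ℝ) < 2 / D := by positivity
      rw [Real.zero_rpow (by rw [← hD]; positivity : 1 + 2 / dExp n γ ≠ 0)]
      simp
    simp only [hM0, hk0, integral_zero]
    rw [← hN0, Real.zero_rpow (by linarith : γ ≠ 0)]
    ring
  · -- case 0 < N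
    set A := m ^ ((n : ℝ) * (γ - 1) / 2) * (2 * γ / (γ - 1)) * N ^ (γ - 1) with hAdef
    have hA : 0 < A := by
      apply mul_pos (mul_pos (Real.rpow_pos_of_pos hm _) hbase)
        (Real.rpow_pos_of_pos hNpos _)
    -- notation for the truncated quantity
    have hMv : ∀ v, maxwellian n m γ N u v
        = c * (max (A - m * ‖v - u‖ ^ 2) 0) ^ (D/2) := fun v => rfl
    have h1D : (0:ℝ) < 1 + 2/D := by positivity
    have hcD : (0:ℝ) < c ^ (2/D) := Real.rpow_pos_of_pos hc _
    -- pointwise identity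
    have hpt : ∀ v : EuclideanSpace ℝ (Fin n),
        kinEntropy n m γ (maxwellian n m γ N u v) v =
        m/2*c * (‖v - u‖^2 * (max (A - m * ‖v - u‖^2) 0) ^ (D/2))
        + m*c * ((inner ℝ (v-u) u : ℝ) * (max (A - m * ‖v - u‖^2) 0) ^ (D/2))
        + m/2*c*‖u‖^2 * ((max (A - m * ‖v - u‖^2) 0) ^ (D/2))
        + c/(2*(1+2/D)) * ((max (A - m * ‖v - u‖^2) 0) ^ (D/2+1)) := by
      intro v
      rw [kinEntropy, hMv v]
      set q := max (A - m * ‖v - u‖ ^ 2) 0 with hq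
      have hq0 : 0 ≤ q := le_max_right _ _
      have hvsq : ‖v‖^2 = ‖v-u‖^2 + 2*(inner ℝ (v-u) u : ℝ) + ‖u‖^2 := by
        have h := norm_add_sq_real (v-u) u
        rwa [sub_add_cancel] at h
      have fact1 : (c * q^(D/2))^(1+2/D) = (c * c^(2/D)) * q^(D/2+1) := by
        rw [Real.mul_rpow hc.le (Real.rpow_nonneg hq0 _), ← Real.rpow_mul hq0,
          Real.rpow_add hc, Real.rpow_one]
        congr 2
        field_simp
      rw [hvsq, fact1]
      have hcD' : c ^ (2/D) ≠ 0 := hcD.ne'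
      have h1D' : (1:ℝ) + 2/D ≠ 0 := h1D.ne'
      rw [← hD, ← hcdef]
      field_simp
    -- integrability
    obtain ⟨hcont1, hcs1⟩ := mwAux_contCS (n := n) hm hA hD2 u
    obtain ⟨hcont2, hcs2⟩ := mwAux_contCS (n := n) hm hA hD21 u
    have iQ1 : Integrable (fun v : EuclideanSpace ℝ (Fin n) =>
        (max (A - m * ‖v - u‖^2) 0) ^ (D/2)) := hcont1.integrable_of_hasCompactSupport hcs1
    have iQ2 : Integrable (fun v : EuclideanSpace ℝ (Fin n) =>
        (max (A - m * ‖v - u‖^2) 0) ^ (D/2+1)) := hcont2.integrable_of_hasCompactSupport hcs2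
    have hcontn : Continuous (fun v : EuclideanSpace ℝ (Fin n) => ‖v - u‖^2) :=
      ((continuous_id.sub continuous_const).norm).pow 2
    have hconti : Continuous (fun v : EuclideanSpace ℝ (Fin n) => (inner ℝ (v-u) u : ℝ)) :=
      (continuous_id.sub continuous_const).inner continuous_const
    have ig : Integrable (fun v : EuclideanSpace ℝ (Fin n) =>
        ‖v - u‖^2 * (max (A - m * ‖v - u‖^2) 0) ^ (D/2)) :=
      (hcontn.mul hcont1).integrable_of_hasCompactSupport (hcs1.mul_left)
    have ii : Integrable (fun v : EuclideanSpace ℝ (Fin n) =>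
        (inner ℝ (v-u) u : ℝ) * (max (A - m * ‖v - u‖^2) 0) ^ (D/2)) :=
      (hconti.mul hcont1).integrable_of_hasCompactSupport (hcs1.mul_left)
    -- set values of the two basic integrals
    set I₁ := ∫ v : EuclideanSpace ℝ (Fin n), (max (A - m * ‖v - u‖^2) 0) ^ (D/2) with hI₁def
    set I₂ := ∫ v : EuclideanSpace ℝ (Fin n), (max (A - m * ‖v - u‖^2) 0) ^ (D/2+1) with hI₂def
    clear_value D c A I₁ I₂
    have hcne : c ≠ 0 := hc.ne'
    -- split the integral
    have i1 : Integrable (fun v : EuclideanSpace ℝ (Fin n) =>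
        m/2*c * (‖v - u‖^2 * (max (A - m * ‖v - u‖^2) 0) ^ (D/2))) := ig.const_mul _
    have i2 : Integrable (fun v : EuclideanSpace ℝ (Fin n) =>
        m*c * ((inner ℝ (v-u) u : ℝ) * (max (A - m * ‖v - u‖^2) 0) ^ (D/2))) := ii.const_mul _
    have i3 : Integrable (fun v : EuclideanSpace ℝ (Fin n) =>
        m/2*c*‖u‖^2 * ((max (A - m * ‖v - u‖^2) 0) ^ (D/2))) := iQ1.const_mul _
    have i4 : Integrable (fun v : EuclideanSpace ℝ (Fin n) =>
        c/(2*(1+2/D)) * ((max (A - m * ‖v - u‖^2) 0) ^ (D/2+1))) := iQ2.const_mul _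
    have i12 : Integrable (fun v : EuclideanSpace ℝ (Fin n) =>
        m/2*c * (‖v - u‖^2 * (max (A - m * ‖v - u‖^2) 0) ^ (D/2))
        + m*c * ((inner ℝ (v-u) u : ℝ) * (max (A - m * ‖v - u‖^2) 0) ^ (D/2))) := i1.add i2
    have i123 : Integrable (fun v : EuclideanSpace ℝ (Fin n) =>
        m/2*c * (‖v - u‖^2 * (max (A - m * ‖v - u‖^2) 0) ^ (D/2))
        + m*c * ((inner ℝ (v-u) u : ℝ) * (max (A - m * ‖v - u‖^2) 0) ^ (D/2))
        + m/2*c*‖u‖^2 * ((max (A - m * ‖v - u‖^2) 0) ^ (D/2))) := i12.add i3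
    have hsplit : (∫ v : EuclideanSpace ℝ (Fin n), kinEntropy n m γ (maxwellian n m γ N u v) v)
        = m/2*c * (∫ v : EuclideanSpace ℝ (Fin n),
            ‖v - u‖^2 * (max (A - m * ‖v - u‖^2) 0) ^ (D/2))
          + m*c * (∫ v : EuclideanSpace ℝ (Fin n),
            (inner ℝ (v-u) u : ℝ) * (max (A - m * ‖v - u‖^2) 0) ^ (D/2))
          + m/2*c*‖u‖^2 * I₁ + c/(2*(1+2/D)) * I₂ := by
      simp only [hpt]
      have s1 : (∫ v : EuclideanSpace ℝ (Fin n),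
          (m/2*c * (‖v - u‖^2 * (max (A - m * ‖v - u‖^2) 0) ^ (D/2))
          + m*c * ((inner ℝ (v-u) u : ℝ) * (max (A - m * ‖v - u‖^2) 0) ^ (D/2))
          + m/2*c*‖u‖^2 * ((max (A - m * ‖v - u‖^2) 0) ^ (D/2))
          + c/(2*(1+2/D)) * ((max (A - m * ‖v - u‖^2) 0) ^ (D/2+1))))
          = (∫ v : EuclideanSpace ℝ (Fin n),
          (m/2*c * (‖v - u‖^2 * (max (A - m * ‖v - u‖^2) 0) ^ (D/2))
          + m*c * ((inner ℝ (v-u) u : ℝ) * (max (A - m * ‖v - u‖^2) 0) ^ (D/2))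
          + m/2*c*‖u‖^2 * ((max (A - m * ‖v - u‖^2) 0) ^ (D/2))))
          + ∫ v : EuclideanSpace ℝ (Fin n),
            c/(2*(1+2/D)) * ((max (A - m * ‖v - u‖^2) 0) ^ (D/2+1)) :=
        integral_add i123 i4
      have s2 : (∫ v : EuclideanSpace ℝ (Fin n),
          (m/2*c * (‖v - u‖^2 * (max (A - m * ‖v - u‖^2) 0) ^ (D/2))
          + m*c * ((inner ℝ (v-u) u : ℝ) * (max (A - m * ‖v - u‖^2) 0) ^ (D/2))
          + m/2*c*‖u‖^2 * ((max (A - m * ‖v - u‖^2) 0) ^ (D/2))))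
          = (∫ v : EuclideanSpace ℝ (Fin n),
          (m/2*c * (‖v - u‖^2 * (max (A - m * ‖v - u‖^2) 0) ^ (D/2))
          + m*c * ((inner ℝ (v-u) u : ℝ) * (max (A - m * ‖v - u‖^2) 0) ^ (D/2))))
          + ∫ v : EuclideanSpace ℝ (Fin n),
            m/2*c*‖u‖^2 * ((max (A - m * ‖v - u‖^2) 0) ^ (D/2)) :=
        integral_add i12 i3
      have s3 : (∫ v : EuclideanSpace ℝ (Fin n),
          (m/2*c * (‖v - u‖^2 * (max (A - m * ‖v - u‖^2) 0) ^ (D/2))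
          + m*c * ((inner ℝ (v-u) u : ℝ) * (max (A - m * ‖v - u‖^2) 0) ^ (D/2))))
          = (∫ v : EuclideanSpace ℝ (Fin n),
            m/2*c * (‖v - u‖^2 * (max (A - m * ‖v - u‖^2) 0) ^ (D/2)))
          + ∫ v : EuclideanSpace ℝ (Fin n),
            m*c * ((inner ℝ (v-u) u : ℝ) * (max (A - m * ‖v - u‖^2) 0) ^ (D/2)) :=
        integral_add i1 i2
      rw [s1, s2, s3, MeasureTheory.integral_const_mul, MeasureTheory.integral_const_mul,
        MeasureTheory.integral_const_mul, MeasureTheory.integral_const_mul,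
        ← hI₁def, ← hI₂def]
    -- odd term vanishes
    have hodd : (∫ v : EuclideanSpace ℝ (Fin n),
        (inner ℝ (v-u) u : ℝ) * (max (A - m * ‖v - u‖^2) 0) ^ (D/2)) = 0 := by
      set φ : EuclideanSpace ℝ (Fin n) → ℝ :=
        fun w => (inner ℝ w u : ℝ) * (max (A - m * ‖w‖^2) 0) ^ (D/2) with hφ
      have hre : (fun v : EuclideanSpace ℝ (Fin n) =>
          (inner ℝ (v-u) u : ℝ) * (max (A - m * ‖v - u‖^2) 0) ^ (D/2))
          = fun v => φ (v - u) := rfl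
      rw [hre, integral_sub_right_eq_self φ u]
      have hoddφ : ∀ w, φ (-w) = - φ w := by
        intro w
        simp only [hφ, inner_neg_left, norm_neg, neg_mul]
      have h1 : ∫ w, φ w = ∫ w, φ (-w) := (integral_neg_eq_self φ volume).symm
      rw [funext hoddφ, integral_neg] at h1
      linarith
    -- first moment identity
    have hptm : ∀ v : EuclideanSpace ℝ (Fin n),
        m * (‖v - u‖^2 * (max (A - m * ‖v - u‖^2) 0) ^ (D/2))
        = A * (max (A - m * ‖v - u‖^2) 0) ^ (D/2)
          - (max (A - m * ‖v - u‖^2) 0) ^ (D/2+1) := by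
      intro v
      rcases le_or_gt (A - m * ‖v - u‖^2) 0 with h | h
      · rw [max_eq_right h, Real.zero_rpow hD2.ne', Real.zero_rpow hD21.ne']
        ring
      · rw [max_eq_left h.le, Real.rpow_add_one h.ne']
        ring
    have hJ1 : m * (∫ v : EuclideanSpace ℝ (Fin n),
        ‖v - u‖^2 * (max (A - m * ‖v - u‖^2) 0) ^ (D/2)) = A * I₁ - I₂ := by
      rw [← MeasureTheory.integral_const_mul]
      simp only [hptm]
      rw [integral_sub (iQ1.const_mul _) iQ2, MeasureTheory.integral_const_mul,
        ← hI₁def, ← hI₂def]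
    -- compute the basic integrals
    have hIv₁ := mwAux_scaled_integral hn hm hA hD2 u
    have hIv₂ := mwAux_scaled_integral hn hm hA hD21 u
    -- Gamma-function bookkeeping
    have hγne : γ - 1 ≠ 0 := by linarith
    have hγ0 : γ ≠ 0 := by linarith
    have e₁ : D/2 + (n:ℝ)/2 = 1/(γ-1) := by
      rw [hD]; exact mwAux_e₁ n hγne
    have e₂ : (n:ℝ)/2 + (D/2 + 1) = γ/(γ-1) := by
      rw [hD]; exact mwAux_e₂ n hγne
    have e₃ : (D/2 + 1) + (n:ℝ)/2 = 1/(γ-1) + 1 := by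
      rw [hD]; exact mwAux_e₃ n hγne
    have e₄ : (n:ℝ)/2 + ((D/2+1) + 1) = γ/(γ-1) + 1 := by
      rw [hD]; exact mwAux_e₄ n hγne
    have hEA : A ^ ((1:ℝ)/(γ-1))
        = m^((n:ℝ)/2) * (2*γ/(γ-1))^((1:ℝ)/(γ-1)) * N := by
      rw [hAdef, Real.mul_rpow (by positivity) (Real.rpow_nonneg hNpos.le _),
        Real.mul_rpow (by positivity) hbase.le,
        ← Real.rpow_mul hm.le, ← Real.rpow_mul hNpos.le]
      have em : (n:ℝ) * (γ-1)/2 * (1/(γ-1)) = (n:ℝ)/2 := by field_simp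
      have eN : (γ-1) * (1/(γ-1)) = 1 := by field_simp
      rw [em, eN, Real.rpow_one]
    have hBB : (2*γ/(γ-1))^(-(1/(γ-1))) * (2*γ/(γ-1))^((1:ℝ)/(γ-1)) = 1 := by
      rw [← Real.rpow_add hbase]
      norm_num
    have hmm' : m^(-((n:ℝ)/2)) * m^((n:ℝ)/2) = 1 := by
      rw [← Real.rpow_add hm]
      norm_num
    have hPne : Real.pi ^ ((n:ℝ)/2) ≠ 0 := (Real.rpow_pos_of_pos Real.pi_pos _).ne'
    have hG1 : Real.Gamma (γ/(γ-1)) ≠ 0 := (Real.Gamma_pos_of_pos hγg).ne'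
    have hG2pos : 0 < Real.Gamma (D/2 + 1) := Real.Gamma_pos_of_pos hD21
    have hG2 : Real.Gamma (D/2 + 1) ≠ 0 := hG2pos.ne'
    -- value of c * I₁
    have hcI₁ : c * I₁ = N := by
      rw [hI₁def, hIv₁, e₁, e₂, hEA, hcdef, cNorm, ← hD]
      exact mwAux_alg1 _ _ _ _ _ _ _ _ hBB hmm' hPne hG1 hG2
    -- value of c * I₂
    have hcI₂ : c * I₂ = N * A * (D/2+1) * (γ-1) / γ := by
      rw [hI₂def, hIv₂, e₃, e₄, Real.rpow_add hA, Real.rpow_one, hEA,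
        Real.Gamma_add_one hD21.ne', Real.Gamma_add_one hγg.ne', hcdef, cNorm, ← hD]
      exact mwAux_alg2 _ _ _ _ _ _ _ _ _ _ _ hBB hmm' hPne hG1 hG2 hγ0 hγne
    -- final assembly
    rw [hsplit, hodd, mul_zero]
    have hI1' : I₁ = N / c := by
      rw [eq_div_iff hcne, mul_comm]; exact hcI₁
    have hI2' : I₂ = N * A * (D/2+1) * (γ-1) / (γ * c) := by
      rw [eq_div_iff (mul_ne_zero hγ0 hcne)]
      calc I₂ * (γ * c) = (c * I₂) * γ := by ring
        _ = N * A * (D/2+1) * (γ-1) := by rw [hcI₂, div_mul_cancel₀ _ hγ0]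
    have hJ1' : (∫ v : EuclideanSpace ℝ (Fin n),
        ‖v - u‖^2 * (max (A - m * ‖v - u‖^2) 0) ^ (D/2)) = (A * I₁ - I₂) / m := by
      rw [eq_div_iff hm.ne', mul_comm, hJ1]
    rw [hJ1', hI1', hI2']
    have hNγ : N ^ γ = N ^ (γ-1) * N := by
      nth_rewrite 1 [show γ = (γ-1) + 1 by ring]
      rw [Real.rpow_add hNpos, Real.rpow_one]
    rw [hAdef, hNγ]
    have hDne : D ≠ 0 := hd.ne'
    have h1Dne : (1:ℝ) + 2/D ≠ 0 := h1D.ne'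
    generalize m ^ ((n:ℝ) * (γ - 1) / 2) = X
    generalize N ^ (γ-1) = Y
    field_simp
    ring
end

section
/- Fix an integer n ≥ 1 and, for i = 1, 2, collision frequencies ν_i > 0, masses m_i > 0 and exponents γ_i with 1 < γ_i < (n+2)/n; set d_i := 2/(γ_i−1) − n, c_i := (2γ_i/(γ_i−1))^{−1/(γ_i−1)} Γ(γ_i/(γ_i−1))/(π^{n/2} Γ(d_i/2+1)), kinetic entropies h_i(g, v) := (m_i/2)|v|² g + (1/(2 c_i^{2/d_i})) g^{1+2/d_i}/(1+2/d_i), and truncated Maxwellians M_i[N,u](v) := c_i ( m_i^{n(γ_i−1)/2}(2γ_i/(γ_i−1)) N^{γ_i−1} − m_i|v−u|² )₊^{d_i/2}. Let f₁, f₂ : ℝⁿ → [0, ∞) be measurable with ∫(1+|v|²) f_i dv < ∞ and ∫ f_i^{1+2/d_i} dv < ∞, set N_i := ∫ f_i dv, and assume ν₁ m₁ N₁ + ν₂ m₂ N₂ > 0; define the common bulk velocity u := ( ν₁ m₁ ∫ v f₁ dv + ν₂ m₂ ∫ v f₂ dv ) / ( ν₁ m₁ N₁ + ν₂ m₂ N₂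 ). Then the total kinetic entropy satisfies the minimization principle Σ_{i=1,2} ν_i ∫_{ℝⁿ} h_i(f_i(v), v) dv ≥ Σ_{i=1,2} ν_i ∫_{ℝⁿ} h_i(M_i[N_i, u](v), v) dv. -/
open MeasureTheory

open Set
open scoped RealInnerProductSpace

lemma realBeta {a b : ℝ} (ha : 0 < a) (hb : 0 < b) :
    ∫ x in (0:ℝ)..1, x ^ (a - 1) * (1 - x) ^ (b - 1)
      = Real.Gamma a * Real.Gamma b / Real.Gamma (a + b) := by
  have hab : 0 < a + b := by linarith
  have key : Complex.Gamma a * Complex.Gamma b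
      = Complex.Gamma (a + b) * Complex.betaIntegral a b :=
    Complex.Gamma_mul_Gamma_eq_betaIntegral (by simpa using ha) (by simpa using hb)
  have hbeta : Complex.betaIntegral a b
      = ((∫ x in (0:ℝ)..1, x ^ (a - 1) * (1 - x) ^ (b - 1) : ℝ) : ℂ) := by
    rw [Complex.betaIntegral, ← intervalIntegral.integral_ofReal]
    refine intervalIntegral.integral_congr fun x hx => ?_
    rw [uIcc_of_le zero_le_one] at hx
    rw [Complex.ofReal_mul, Complex.ofReal_cpow hx.1, Complex.ofReal_cpow (by linarith [hx.2] : (0:ℝ) ≤ 1 - x)]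
    push_cast
    ring
  have hGab : Real.Gamma (a + b) ≠ 0 := (Real.Gamma_pos_of_pos hab).ne'
  have := key
  rw [hbeta] at this
  have h2 : ((Real.Gamma a * Real.Gamma b : ℝ) : ℂ)
      = ((Real.Gamma (a + b) * ∫ x in (0:ℝ)..1, x ^ (a - 1) * (1 - x) ^ (b - 1) : ℝ) : ℂ) := by
    rw [Complex.ofReal_mul, Complex.ofReal_mul, ← Complex.Gamma_ofReal, ← Complex.Gamma_ofReal,
      ← Complex.Gamma_ofReal]
    push_cast
    exact this
  have h3 := Complex.ofReal_injective h2
  field_simp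
  linarith [h3]

lemma radial_aux (n : ℕ) (hn : 1 ≤ n) {s : ℝ} (hs : 0 < s) :
    ∫ y in Ioi (0:ℝ), y ^ (n - 1) • (max (1 - y ^ 2) 0) ^ s
      = (1/2) * (Real.Gamma ((n:ℝ)/2) * Real.Gamma (s+1) / Real.Gamma ((n:ℝ)/2 + (s+1))) := by
  set g : ℝ → ℝ := fun t => (1/2 : ℝ) * t ^ (((n:ℝ) - 2)/2) * (max (1 - t) 0) ^ s with hg
  have key := MeasureTheory.integral_comp_rpow_Ioi g (p := 2) two_ne_zero
  have step1 : ∫ y in Ioi (0:ℝ), y ^ (n - 1) • (max (1 - y ^ 2) 0) ^ s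
      = ∫ x in Ioi (0:ℝ), (|2| * x ^ ((2:ℝ) - 1)) • g (x ^ (2:ℝ)) := by
    refine setIntegral_congr_fun measurableSet_Ioi (fun x hx => ?_)
    have hx0 : (0:ℝ) < x := hx
    have h2 : x ^ (2:ℝ) = x ^ 2 := by
      rw [← Real.rpow_natCast x 2]; norm_num
    have h3 : ((x:ℝ) ^ 2 : ℝ) ^ (((n:ℝ)-2)/2) = x ^ ((n:ℝ)-2) := by
      rw [← Real.rpow_natCast x 2, ← Real.rpow_mul hx0.le]
      congr 1
      ring
    have h4 : x ^ (n-1) = x ^ ((n:ℝ)-1) := by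
      rw [← Real.rpow_natCast x (n-1), Nat.cast_sub hn]
      norm_num
    simp only [smul_eq_mul, hg, h2, h3, h4, abs_two]
    rw [show (2:ℝ)-1 = 1 by norm_num, Real.rpow_one,
      show (n:ℝ)-1 = ((n:ℝ)-2)+1 by ring, Real.rpow_add hx0, Real.rpow_one]
    ring
  have step2 : ∫ t in Ioi (0:ℝ), g t = ∫ t in Ioo (0:ℝ) 1, g t := by
    have hvanish : ∀ t ∈ Ioi (0:ℝ), g t = (Ioo (0:ℝ) 1).indicator g t := by
      intro t ht
      by_cases h1 : t < 1
      · rw [indicator_of_mem (mem_Ioo.mpr ⟨ht, h1⟩)]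
      · rw [indicator_of_notMem (fun hmem => h1 hmem.2)]
        have hm : max (1 - t) 0 = 0 := max_eq_right (by linarith [not_lt.1 h1])
        simp [hg, hm, Real.zero_rpow hs.ne']
    rw [setIntegral_congr_fun measurableSet_Ioi hvanish,
      setIntegral_indicator measurableSet_Ioo,
      inter_eq_self_of_subset_right Ioo_subset_Ioi_self]
  have step3 : ∫ t in Ioo (0:ℝ) 1, g t
      = (1/2) * ∫ t in Ioo (0:ℝ) 1, t ^ ((n:ℝ)/2 - 1) * (1 - t) ^ ((s+1) - 1) := by
    rw [← integral_const_mul]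
    refine setIntegral_congr_fun measurableSet_Ioo (fun t ht => ?_)
    have hm : max (1 - t) 0 = 1 - t := max_eq_left (by linarith [ht.2])
    simp only [hg, hm]
    rw [show ((n:ℝ)-2)/2 = (n:ℝ)/2 - 1 by ring, show (s+1)-1 = s by ring]
    ring
  have step4 : ∫ t in Ioo (0:ℝ) 1, t ^ ((n:ℝ)/2 - 1) * (1 - t) ^ ((s+1) - 1)
      = Real.Gamma ((n:ℝ)/2) * Real.Gamma (s+1) / Real.Gamma ((n:ℝ)/2 + (s+1)) := by
    rw [← integral_Ioc_eq_integral_Ioo, ← intervalIntegral.integral_of_le zero_le_one]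
    exact realBeta (by positivity) (by linarith)
  rw [step1, key, step2, step3, step4]

lemma ball_integral (n : ℕ) (hn : 1 ≤ n) {s : ℝ} (hs : 0 < s) :
    ∫ x : EuclideanSpace ℝ (Fin n), (max (1 - ‖x‖ ^ 2) 0) ^ s
      = Real.pi ^ ((n:ℝ)/2) * (Real.Gamma (s+1) / Real.Gamma ((n:ℝ)/2 + (s+1))) := by
  haveI : Nonempty (Fin n) := ⟨⟨0, hn⟩⟩
  haveI : Nontrivial (EuclideanSpace ℝ (Fin n)) := inferInstance
  have hdim : Module.finrank ℝ (EuclideanSpace ℝ (Fin n)) = n := finrank_euclideanSpace_fin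
  rw [MeasureTheory.integral_fun_norm_addHaar (volume : Measure (EuclideanSpace ℝ (Fin n)))
    (fun r : ℝ => (max (1 - r ^ 2) 0) ^ s)]
  rw [hdim]
  have hvol : (volume (Metric.ball (0 : EuclideanSpace ℝ (Fin n)) 1)).toReal
      = Real.pi ^ ((n:ℝ)/2) / Real.Gamma ((n:ℝ)/2 + 1) := by
    rw [EuclideanSpace.volume_ball]
    simp only [Fintype.card_fin, ENNReal.ofReal_one, one_pow, one_mul]
    rw [ENNReal.toReal_ofReal (by positivity)]
    congr 1
    rw [← Real.rpow_natCast (Real.sqrt Real.pi) n, Real.sqrt_eq_rpow,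
      ← Real.rpow_mul Real.pi_nonneg]
    ring_nf
  rw [radial_aux n hn hs, measureReal_def, hvol]
  have hn2 : (0:ℝ) < (n:ℝ)/2 := by positivity
  have hG1 : Real.Gamma ((n:ℝ)/2 + 1) = ((n:ℝ)/2) * Real.Gamma ((n:ℝ)/2) :=
    Real.Gamma_add_one hn2.ne'
  have hGn : Real.Gamma ((n:ℝ)/2) ≠ 0 := (Real.Gamma_pos_of_pos hn2).ne'
  have hGns : Real.Gamma ((n:ℝ)/2 + (s+1)) ≠ 0 :=
    (Real.Gamma_pos_of_pos (by linarith)).ne'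
  have hnn : (0:ℝ) < n := by exact_mod_cast hn
  rw [hG1, nsmul_eq_mul, smul_eq_mul]
  field_simp

section
variable {n : ℕ} {m γ : ℝ}

lemma dExp_pos (hn : 1 ≤ n) (hγ : 1 < γ) (hγ' : γ < ((n : ℝ) + 2) / n) : 0 < dExp n γ := by
  have hn0 : (0:ℝ) < n := by exact_mod_cast hn
  have hγ1 : (0:ℝ) < γ - 1 := by linarith
  have h2 : γ * n < (n:ℝ) + 2 := (lt_div_iff₀ hn0).mp hγ'
  rw [dExp, sub_pos, lt_div_iff₀ hγ1]
  nlinarith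

lemma cNorm_pos (hn : 1 ≤ n) (hγ : 1 < γ) (hγ' : γ < ((n : ℝ) + 2) / n) : 0 < cNorm n γ := by
  have hγ1 : (0:ℝ) < γ - 1 := by linarith
  have hd := dExp_pos hn hγ hγ'
  have hK : (0:ℝ) < 2 * γ / (γ - 1) := by positivity
  have h1 : 0 < (2 * γ / (γ - 1)) ^ (-(1 / (γ - 1))) := Real.rpow_pos_of_pos hK _
  have h2 : 0 < Real.Gamma (γ / (γ - 1)) := Real.Gamma_pos_of_pos (by positivity)
  have h3 : 0 < Real.pi ^ ((n : ℝ) / 2) := Real.rpow_pos_of_pos Real.pi_pos _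
  have h4 : 0 < Real.Gamma (dExp n γ / 2 + 1) := Real.Gamma_pos_of_pos (by linarith)
  rw [cNorm]
  positivity

lemma maxwellian_integral (hn : 1 ≤ n) (hm : 0 < m) (hγ : 1 < γ)
    (hγ' : γ < ((n : ℝ) + 2) / n) {N : ℝ} (hN : 0 ≤ N) (u : EuclideanSpace ℝ (Fin n)) :
    ∫ v : EuclideanSpace ℝ (Fin n), maxwellian n m γ N u v = N := by
  have hγ1 : (0:ℝ) < γ - 1 := by linarith
  have hd := dExp_pos hn hγ hγ'
  have hc := cNorm_pos hn hγ hγ'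
  set c := cNorm n γ
  set d := dExp n γ with hddef
  set K := 2 * γ / (γ - 1) with hKdef
  have hK : (0:ℝ) < K := by rw [hKdef]; positivity
  set B := m ^ ((n : ℝ) * (γ - 1) / 2) * K * N ^ (γ - 1) with hBdef
  have htrans : ∫ v : EuclideanSpace ℝ (Fin n), maxwellian n m γ N u v
      = ∫ v : EuclideanSpace ℝ (Fin n), c * (max (B - m * ‖v‖ ^ 2) 0) ^ (d/2) := by
    rw [show (fun v : EuclideanSpace ℝ (Fin n) => maxwellian n m γ N u v)
        = (fun v : EuclideanSpace ℝ (Fin n) => c * (max (B - m * ‖v‖ ^ 2) 0) ^ (d/2)) ∘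
          (fun v => v - u) from rfl]
    exact integral_sub_right_eq_self (fun v : EuclideanSpace ℝ (Fin n) =>
      c * (max (B - m * ‖v‖ ^ 2) 0) ^ (d/2)) u
  rw [htrans]
  rcases eq_or_lt_of_le hN with hN0 | hNpos
  · have hB0 : B = 0 := by
      rw [hBdef, ← hN0, Real.zero_rpow hγ1.ne', mul_zero]
    simp only [hB0, zero_sub]
    have : ∀ v : EuclideanSpace ℝ (Fin n),
        c * (max (-(m * ‖v‖ ^ 2)) 0) ^ (d/2) = 0 := by
      intro v
      have : max (-(m * ‖v‖ ^ 2)) 0 = 0 := max_eq_right (neg_nonpos.mpr (by positivity))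
      rw [this, Real.zero_rpow (div_pos hd two_pos).ne', mul_zero]
    rw [integral_congr_ae (Filter.Eventually.of_forall this), integral_zero, hN0]
  · -- N > 0
    have hB : 0 < B := by
      rw [hBdef]
      have := Real.rpow_pos_of_pos hNpos (γ - 1)
      have := Real.rpow_pos_of_pos hm ((n : ℝ) * (γ - 1) / 2)
      positivity
    set R := Real.sqrt (B / m) with hRdef
    have hR : 0 < R := Real.sqrt_pos.mpr (by positivity)
    have hscal := MeasureTheory.Measure.integral_comp_smul
      (volume : Measure (EuclideanSpace ℝ (Fin n)))
      (fun v : EuclideanSpace ℝ (Fin n) => c * (max (B - m * ‖v‖ ^ 2) 0) ^ (d/2)) R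
    rw [finrank_euclideanSpace_fin] at hscal
    have hRn : (0:ℝ) < R ^ n := by positivity
    have habs : |(R ^ n)⁻¹| = (R ^ n)⁻¹ := abs_of_pos (by positivity)
    rw [habs, smul_eq_mul] at hscal
    have hpoint : (fun x : EuclideanSpace ℝ (Fin n) =>
          c * (max (B - m * ‖R • x‖ ^ 2) 0) ^ (d/2))
        = fun x : EuclideanSpace ℝ (Fin n) =>
          (c * B ^ (d/2)) * (max (1 - ‖x‖ ^ 2) 0) ^ (d/2) := by
      funext x
      have h1 : ‖R • x‖ ^ 2 = R ^ 2 * ‖x‖ ^ 2 := by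
        rw [norm_smul, Real.norm_eq_abs, abs_of_pos hR, mul_pow]
      have h2 : m * (R ^ 2 * ‖x‖ ^ 2) = B * ‖x‖ ^ 2 := by
        rw [hRdef, Real.sq_sqrt (by positivity : (0:ℝ) ≤ B / m)]
        field_simp
      have h3 : B - m * ‖R • x‖ ^ 2 = B * (1 - ‖x‖ ^ 2) := by
        rw [h1, h2]; ring
      rw [h3]
      have h4 : max (B * (1 - ‖x‖ ^ 2)) 0 = B * max (1 - ‖x‖ ^ 2) 0 := by
        rw [mul_max_of_nonneg _ _ hB.le, mul_zero]
      rw [h4, Real.mul_rpow hB.le (le_max_right _ _)]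
      ring
    rw [hpoint] at hscal
    rw [integral_const_mul, ball_integral n hn (by positivity : (0:ℝ) < d/2)] at hscal
    -- hscal : (c * B^(d/2)) * (π^(n/2) * (Γ(d/2+1)/Γ(n/2+(d/2+1)))) = (R^n)⁻¹ * ∫ ...
    have hint : ∫ v : EuclideanSpace ℝ (Fin n), c * (max (B - m * ‖v‖ ^ 2) 0) ^ (d/2)
        = R ^ n * ((c * B ^ (d/2)) * (Real.pi ^ ((n:ℝ)/2)
            * (Real.Gamma (d/2+1) / Real.Gamma ((n:ℝ)/2 + (d/2+1))))) := by
      rw [hscal]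
      field_simp
    rw [hint]
    -- final algebra
    have hGamma_eq : Real.Gamma ((n:ℝ)/2 + (d/2+1)) = Real.Gamma (γ / (γ - 1)) := by
      congr 1
      rw [hddef, dExp]
      field_simp
      ring
    have hRn2 : R ^ n = (B / m) ^ ((n:ℝ)/2) := by
      rw [hRdef, ← Real.rpow_natCast (Real.sqrt (B/m)) n, Real.sqrt_eq_rpow,
        ← Real.rpow_mul (by positivity : (0:ℝ) ≤ B / m)]
      congr 1
      ring
    have hBm : (B / m) ^ ((n:ℝ)/2) = B ^ ((n:ℝ)/2) / m ^ ((n:ℝ)/2) :=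
      Real.div_rpow hB.le hm.le _
    have hBsum : B ^ ((n:ℝ)/2) * B ^ (d/2) = B ^ (1/(γ-1)) := by
      rw [← Real.rpow_add hB]
      congr 1
      rw [hddef, dExp]
      field_simp
      ring
    have hBpow : B ^ (1/(γ-1)) = m ^ ((n:ℝ)/2) * K ^ (1/(γ-1)) * N := by
      rw [hBdef]
      rw [Real.mul_rpow (by positivity) (Real.rpow_nonneg hNpos.le _),
        Real.mul_rpow (by positivity) hK.le,
        ← Real.rpow_mul hm.le, ← Real.rpow_mul hNpos.le]
      rw [show (n : ℝ) * (γ - 1) / 2 * (1/(γ-1)) = (n:ℝ)/2 by field_simp,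
        show (γ - 1) * (1/(γ-1)) = 1 by field_simp, Real.rpow_one]
    have hcdef : c = (K ^ (1/(γ-1)))⁻¹ * Real.Gamma (γ / (γ - 1)) /
        (Real.pi ^ ((n : ℝ) / 2) * Real.Gamma (d / 2 + 1)) := by
      rw [show c = cNorm n γ from rfl, cNorm, ← hKdef, ← hddef,
        Real.rpow_neg hK.le]
    have hG1 : Real.Gamma (γ / (γ - 1)) ≠ 0 :=
      (Real.Gamma_pos_of_pos (by positivity)).ne'
    have hG2 : Real.Gamma (d / 2 + 1) ≠ 0 :=
      (Real.Gamma_pos_of_pos (by linarith)).ne'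
    have hpi : Real.pi ^ ((n:ℝ)/2) ≠ 0 := (Real.rpow_pos_of_pos Real.pi_pos _).ne'
    have hmn : m ^ ((n:ℝ)/2) ≠ 0 := (Real.rpow_pos_of_pos hm _).ne'
    have hKe : K ^ (1/(γ-1)) ≠ 0 := (Real.rpow_pos_of_pos hK _).ne'
    rw [hGamma_eq, hRn2, hBm, hcdef]
    field_simp
    linear_combination (hBsum.trans hBpow)
end

section
variable {n : ℕ} {m γ : ℝ}

lemma young_pow {p : ℝ} (hp : 1 < p) {g M : ℝ} (hg : 0 ≤ g) (hM : 0 ≤ M) :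
    M ^ (p - 1) * (g - M) ≤ g ^ p / p - M ^ p / p := by
  rcases eq_or_lt_of_le hM with hM0 | hMpos
  · rw [← hM0, Real.zero_rpow (by linarith : p - 1 ≠ 0), Real.zero_rpow (by linarith : p ≠ 0)]
    have : 0 ≤ g ^ p / p := div_nonneg (Real.rpow_nonneg hg p) (by linarith)
    simpa using this
  · set q := p / (p - 1) with hq
    have hpq : p.HolderConjugate q := Real.HolderConjugate.conjExponent hp
    have hy := Real.young_inequality_of_nonneg hg (Real.rpow_nonneg hMpos.le (p-1)) hpq
    have e1 : (M ^ (p - 1)) ^ q = M ^ p := by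
      rw [← Real.rpow_mul hMpos.le]
      congr 1
      rw [hq, mul_div_assoc']; exact mul_div_cancel_left₀ p (by linarith : p - 1 ≠ 0)
    have e2 : M ^ (p - 1) * M = M ^ p := by
      nth_rewrite 2 [← Real.rpow_one M]
      rw [← Real.rpow_add hMpos]; norm_num
    have e3 : M ^ p / q = M ^ p - M ^ p / p := by
      have h1 : 1/p + 1/q = 1 := by
        have := hpq.inv_add_inv_eq_one
        simpa [one_div] using this
      have hp0 : (p:ℝ) ≠ 0 := by linarith
      have hq0 : (q:ℝ) ≠ 0 := hpq.symm.ne_zero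
      field_simp at h1 ⊢
      have hp1 : p - 1 ≠ 0 := by linarith
      rw [hq]
      field_simp
    rw [e1] at hy
    have e4 : M ^ (p - 1) * (g - M) = g * M ^ (p - 1) - M ^ p := by
      rw [← e2]; ring
    linarith [hy, e3, e4]


lemma entropy_pointwise {n : ℕ} {m γ : ℝ} (hn : 1 ≤ n) (hm : 0 < m) (hγ : 1 < γ)
    (hγ' : γ < ((n : ℝ) + 2) / n) (B : ℝ) (u v : EuclideanSpace ℝ (Fin n)) {g : ℝ} (hg : 0 ≤ g) :
    (B/2 + m * ⟪u, v⟫ - m * ‖u‖^2/2)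
        * (g - cNorm n γ * (max (B - m * ‖v - u‖ ^ 2) 0) ^ (dExp n γ / 2))
      ≤ kinEntropy n m γ g v
        - kinEntropy n m γ (cNorm n γ * (max (B - m * ‖v - u‖ ^ 2) 0) ^ (dExp n γ / 2)) v := by
  have hd := dExp_pos hn hγ hγ'
  have hc := cNorm_pos hn hγ hγ'
  set d := dExp n γ
  set c := cNorm n γ
  set p : ℝ := 1 + 2 / d with hpdef
  have hp : 1 < p := by
    have : 0 < 2 / d := by positivity
    rw [hpdef]; linarith
  set t := B - m * ‖v - u‖ ^ 2 with htdef
  set b : ℝ := 1 / (2 * c ^ (2 / d)) with hbdef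
  have hce : (0:ℝ) < c ^ (2/d) := Real.rpow_pos_of_pos hc _
  have hb : 0 < b := by rw [hbdef]; positivity
  have hψ : B/2 + m * ⟪u, v⟫ - m * ‖u‖^2/2 = m/2 * ‖v‖^2 + t/2 := by
    rw [htdef, norm_sub_sq_real, real_inner_comm v u]
    ring
  rw [hψ]
  by_cases ht : 0 < t
  · have hmax : max t 0 = t := max_eq_left ht.le
    rw [hmax]
    set M : ℝ := c * t ^ (d/2) with hMdef
    have hM : 0 ≤ M := by positivity
    have hMp : M ^ (p - 1) = c ^ (2/d) * t := by
      rw [hMdef, show p - 1 = 2/d by rw [hpdef]; ring,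
        Real.mul_rpow hc.le (Real.rpow_nonneg ht.le _), ← Real.rpow_mul ht.le,
        show d/2 * (2/d) = 1 by field_simp, Real.rpow_one]
    have key := young_pow hp hg hM
    have hbM : b * M ^ (p-1) = t / 2 := by
      rw [hMp, hbdef]
      field_simp
    have key2 : b * (M ^ (p-1) * (g - M)) ≤ b * (g ^ p / p - M ^ p / p) :=
      mul_le_mul_of_nonneg_left key hb.le
    rw [show kinEntropy n m γ g v = m/2 * ‖v‖^2 * g + b * (g ^ p / p) from rfl,
      show kinEntropy n m γ M v = m/2 * ‖v‖^2 * M + b * (M ^ p / p) from rfl]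
    nlinarith [key2, hbM]
  · have hmax : max t 0 = 0 := max_eq_right (not_lt.mp ht)
    rw [hmax, Real.zero_rpow (by positivity : d/2 ≠ 0), mul_zero]
    have hE0 : kinEntropy n m γ 0 v = 0 := by
      rw [show kinEntropy n m γ 0 v = m/2 * ‖v‖^2 * 0 + b * ((0:ℝ) ^ p / p) from rfl,
        Real.zero_rpow (by linarith : p ≠ 0)]
      ring
    rw [hE0]
    rw [show kinEntropy n m γ g v = m/2 * ‖v‖^2 * g + b * (g ^ p / p) from rfl]
    have h1 : 0 ≤ b * (g ^ p / p) := by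
      have := Real.rpow_nonneg hg p
      positivity
    have h2 : t / 2 * g ≤ 0 := mul_nonpos_of_nonpos_of_nonneg (by linarith [not_lt.mp ht]) hg
    nlinarith
end

section
variable {n : ℕ} {m γ : ℝ}

lemma maxwellian_nonneg (hn : 1 ≤ n) (hγ : 1 < γ) (hγ' : γ < ((n : ℝ) + 2) / n)
    (N : ℝ) (u v : EuclideanSpace ℝ (Fin n)) : 0 ≤ maxwellian n m γ N u v :=
  mul_nonneg (cNorm_pos hn hγ hγ').le (Real.rpow_nonneg (le_max_right _ _) _)

lemma maxwellian_continuous (N : ℝ) (u : EuclideanSpace ℝ (Fin n)) (hd : 0 < dExp n γ) :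
    Continuous (fun v => maxwellian n m γ N u v) := by
  apply Continuous.mul continuous_const
  apply Continuous.rpow_const
  · exact (continuous_const.sub (continuous_const.mul
      ((continuous_id.sub continuous_const).norm.pow 2))).max continuous_const
  · exact fun _ => Or.inr (by positivity)

lemma maxwellian_hasCompactSupport (hm : 0 < m) (N : ℝ) (u : EuclideanSpace ℝ (Fin n))
    (hd : 0 < dExp n γ) :
    HasCompactSupport (fun v => maxwellian n m γ N u v) := by
  set B := m ^ ((n : ℝ) * (γ - 1) / 2) * (2 * γ / (γ - 1)) * N ^ (γ - 1) with hB
  apply HasCompactSupport.intro (K := Metric.closedBall u (Real.sqrt (|B| / m)))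
    (isCompact_closedBall u _)
  intro v hv
  rw [Metric.mem_closedBall, not_le, dist_eq_norm] at hv
  have h0 : Real.sqrt (|B| / m) ≥ 0 := Real.sqrt_nonneg _
  have h1 : |B| / m < ‖v - u‖ ^ 2 := by
    calc |B| / m = Real.sqrt (|B| / m) ^ 2 := (Real.sq_sqrt (by positivity)).symm
    _ < ‖v - u‖ ^ 2 := by
      apply pow_lt_pow_left₀ hv h0
      norm_num
  have h2 : B - m * ‖v - u‖ ^ 2 < 0 := by
    have h1' : |B| < ‖v - u‖ ^ 2 * m := (div_lt_iff₀ hm).mp h1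
    have := le_abs_self B
    nlinarith
  rw [maxwellian, ← hB, max_eq_right h2.le, Real.zero_rpow (by positivity : dExp n γ / 2 ≠ 0),
    mul_zero]

lemma maxwellian_integrable (hm : 0 < m) (N : ℝ) (u : EuclideanSpace ℝ (Fin n))
    (hd : 0 < dExp n γ) : Integrable (fun v => maxwellian n m γ N u v) :=
  (maxwellian_continuous N u hd).integrable_of_hasCompactSupport
    (maxwellian_hasCompactSupport hm N u hd)

lemma maxwellian_smul_integrable (hm : 0 < m) (N : ℝ) (u : EuclideanSpace ℝ (Fin n))
    (hd : 0 < dExp n γ) :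
    Integrable (fun v : EuclideanSpace ℝ (Fin n) => maxwellian n m γ N u v • v) := by
  apply Continuous.integrable_of_hasCompactSupport
  · exact (maxwellian_continuous N u hd).smul continuous_id
  · exact (maxwellian_hasCompactSupport hm N u hd).smul_right

lemma maxwellian_normsq_integrable (hm : 0 < m) (N : ℝ) (u : EuclideanSpace ℝ (Fin n))
    (hd : 0 < dExp n γ) :
    Integrable (fun v : EuclideanSpace ℝ (Fin n) => ‖v‖ ^ 2 * maxwellian n m γ N u v) := by
  apply Continuous.integrable_of_hasCompactSupport
  · exact ((continuous_norm.pow 2)).mul (maxwellian_continuous N u hd)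
  · exact (maxwellian_hasCompactSupport hm N u hd).mul_left

lemma maxwellian_rpow_integrable (hm : 0 < m) (N : ℝ) (u : EuclideanSpace ℝ (Fin n))
    (hd : 0 < dExp n γ) {p : ℝ} (hp : 0 < p) :
    Integrable (fun v : EuclideanSpace ℝ (Fin n) => maxwellian n m γ N u v ^ p) := by
  apply Continuous.integrable_of_hasCompactSupport
  · exact (maxwellian_continuous N u hd).rpow_const (fun _ => Or.inr hp.le)
  · exact (maxwellian_hasCompactSupport hm N u hd).comp_left (g := fun x : ℝ => x ^ p)
      (Real.zero_rpow hp.ne')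

lemma maxwellian_moment (hn : 1 ≤ n) (hm : 0 < m) (hγ : 1 < γ)
    (hγ' : γ < ((n : ℝ) + 2) / n) {N : ℝ} (hN : 0 ≤ N) (u : EuclideanSpace ℝ (Fin n)) :
    ∫ v : EuclideanSpace ℝ (Fin n), maxwellian n m γ N u v • v = N • u := by
  have hd := dExp_pos hn hγ hγ'
  set M : EuclideanSpace ℝ (Fin n) → ℝ := fun v => maxwellian n m γ N u v with hM
  have hsymm : ∀ v : EuclideanSpace ℝ (Fin n), M ((2:ℝ) • u - v) = M v := by
    intro v
    have : (2:ℝ) • u - v - u = u - v := by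
      rw [two_smul]; abel
    rw [hM]
    simp only [maxwellian, this, norm_sub_rev u v]
  have hchange : ∫ v : EuclideanSpace ℝ (Fin n), M v • v
      = ∫ v : EuclideanSpace ℝ (Fin n), M ((2:ℝ) • u - v) • ((2:ℝ) • u - v) := by
    have e1 : ∀ F : EuclideanSpace ℝ (Fin n) → EuclideanSpace ℝ (Fin n),
        ∫ v, F ((2:ℝ) • u - v) = ∫ v, F v := by
      intro F
      have h1 : ∫ v : EuclideanSpace ℝ (Fin n), F ((2:ℝ) • u + v) = ∫ v, F v :=
        integral_add_left_eq_self F ((2:ℝ) • u)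
      have h2 : ∫ v : EuclideanSpace ℝ (Fin n), F ((2:ℝ) • u + (-v))
          = ∫ v : EuclideanSpace ℝ (Fin n), F ((2:ℝ) • u + v) :=
        integral_neg_eq_self (fun v : EuclideanSpace ℝ (Fin n) => F ((2:ℝ) • u + v)) volume
      rw [show (fun v : EuclideanSpace ℝ (Fin n) => F ((2:ℝ) • u - v))
          = fun v : EuclideanSpace ℝ (Fin n) => F ((2:ℝ) • u + (-v)) by
        funext v; rw [sub_eq_add_neg]]
      exact h2.trans h1
    exact (e1 (fun v => M v • v)).symm
  have hMint : Integrable M := maxwellian_integrable hm N u hd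
  have hFint : Integrable (fun v : EuclideanSpace ℝ (Fin n) => M v • v) :=
    maxwellian_smul_integrable hm N u hd
  have expand : ∫ v : EuclideanSpace ℝ (Fin n), M ((2:ℝ) • u - v) • ((2:ℝ) • u - v)
      = (∫ v : EuclideanSpace ℝ (Fin n), M v) • ((2:ℝ) • u)
        - ∫ v : EuclideanSpace ℝ (Fin n), M v • v := by
    have : (fun v : EuclideanSpace ℝ (Fin n) => M ((2:ℝ) • u - v) • ((2:ℝ) • u - v))
        = fun v : EuclideanSpace ℝ (Fin n) => M v • ((2:ℝ) • u) - M v • v := by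
      funext v
      rw [hsymm v, smul_sub]
    rw [this, integral_sub (hMint.smul_const _) hFint, integral_smul_const]
  have hiq : ∫ v : EuclideanSpace ℝ (Fin n), M v • v
      = N • ((2:ℝ) • u) - ∫ v : EuclideanSpace ℝ (Fin n), M v • v := by
    conv_lhs => rw [hchange, expand]
    rw [maxwellian_integral hn hm hγ hγ' hN u]
  have h2 : (2:ℝ) • (∫ v : EuclideanSpace ℝ (Fin n), M v • v) = (2:ℝ) • (N • u) := by
    rw [two_smul, two_smul]
    nth_rewrite 1 [hiq]
    have e : N • ((2:ℝ) • u) = N • u + N • u := by rw [smul_comm, two_smul]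
    rw [e]
    abel
  exact smul_right_injective _ (two_ne_zero) h2
end

section
variable {n : ℕ} {m γ : ℝ}

lemma species_bound (hn : 1 ≤ n) (hm : 0 < m) (hγ : 1 < γ) (hγ' : γ < ((n : ℝ) + 2) / n)
    (f : EuclideanSpace ℝ (Fin n) → ℝ) (hfmeas : Measurable f) (hf0 : ∀ v, 0 ≤ f v)
    (hf1int : Integrable fun v : EuclideanSpace ℝ (Fin n) => (1 + ‖v‖ ^ 2) * f v)
    (hfpow : Integrable fun v : EuclideanSpace ℝ (Fin n) => f v ^ (1 + 2 / dExp n γ))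
    (u : EuclideanSpace ℝ (Fin n)) :
    ∫ v : EuclideanSpace ℝ (Fin n),
        kinEntropy n m γ (maxwellian n m γ (∫ w : EuclideanSpace ℝ (Fin n), f w) u v) v
      ≤ (∫ v : EuclideanSpace ℝ (Fin n), kinEntropy n m γ (f v) v)
        - m * (⟪u, ∫ w : EuclideanSpace ℝ (Fin n), f w • w⟫
            - (∫ w : EuclideanSpace ℝ (Fin n), f w) * ‖u‖ ^ 2) := by
  have hd := dExp_pos hn hγ hγ'
  have hc := cNorm_pos hn hγ hγ'
  set N : ℝ := ∫ w : EuclideanSpace ℝ (Fin n), f w with hNdef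
  have hN : 0 ≤ N := integral_nonneg hf0
  set d := dExp n γ
  set c := cNorm n γ
  set p : ℝ := 1 + 2 / d with hpdef
  have hp : 0 < p := by positivity
  set b : ℝ := 1 / (2 * c ^ (2 / d)) with hbdef
  have hb : 0 < b := by
    have : (0:ℝ) < c ^ (2/d) := Real.rpow_pos_of_pos hc _
    positivity
  set B : ℝ := m ^ ((n : ℝ) * (γ - 1) / 2) * (2 * γ / (γ - 1)) * N ^ (γ - 1) with hBdef
  set M : EuclideanSpace ℝ (Fin n) → ℝ := fun v => maxwellian n m γ N u v with hMdef
  set ψ : EuclideanSpace ℝ (Fin n) → ℝ := fun v => B/2 + m * ⟪u, v⟫ - m * ‖u‖^2/2 with hψdef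
  -- integrability of f-side objects
  have hfint : Integrable f := by
    refine hf1int.mono' hfmeas.aestronglyMeasurable (Filter.Eventually.of_forall fun v => ?_)
    have h0 := hf0 v
    have h1 : (0:ℝ) ≤ ‖v‖ ^ 2 := by positivity
    rw [Real.norm_eq_abs, abs_of_nonneg h0]
    nlinarith
  have hnormsqf : Integrable (fun v : EuclideanSpace ℝ (Fin n) => ‖v‖ ^ 2 * f v) := by
    refine hf1int.mono' ((continuous_norm.pow 2).measurable.mul hfmeas).aestronglyMeasurable
      (Filter.Eventually.of_forall fun v => ?_)
    have h0 := hf0 v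
    have h1 : (0:ℝ) ≤ ‖v‖ ^ 2 := by positivity
    rw [Real.norm_eq_abs, abs_of_nonneg (by positivity)]
    nlinarith
  have hsmulf : Integrable (fun v : EuclideanSpace ℝ (Fin n) => f v • v) := by
    refine hf1int.mono' (hfmeas.aestronglyMeasurable.smul aestronglyMeasurable_id)
      (Filter.Eventually.of_forall fun v => ?_)
    have h0 := hf0 v
    rw [norm_smul, Real.norm_eq_abs, abs_of_nonneg h0]
    have h2 : ‖v‖ ≤ 1 + ‖v‖ ^ 2 := by nlinarith [norm_nonneg v, sq_nonneg (‖v‖ - 1)]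
    nlinarith [norm_nonneg v]
  have hinner_f : Integrable (fun v : EuclideanSpace ℝ (Fin n) => ⟪u, v⟫ * f v) := by
    refine (hf1int.const_mul ‖u‖).mono'
      (((innerSL ℝ u).continuous.measurable.mul hfmeas).aestronglyMeasurable)
      (Filter.Eventually.of_forall fun v => ?_)
    have h0 := hf0 v
    have h2 : |⟪u, v⟫| ≤ ‖u‖ * ‖v‖ := abs_real_inner_le_norm u v
    have h3 : ‖v‖ ≤ 1 + ‖v‖ ^ 2 := by nlinarith [norm_nonneg v, sq_nonneg (‖v‖ - 1)]
    rw [Real.norm_eq_abs, abs_mul, abs_of_nonneg h0]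
    have h4 : |⟪u, v⟫| * f v ≤ ‖u‖ * ‖v‖ * f v := by
      apply mul_le_mul_of_nonneg_right h2 h0
    calc |⟪u, v⟫| * f v ≤ ‖u‖ * ‖v‖ * f v := h4
      _ ≤ ‖u‖ * ((1 + ‖v‖ ^ 2) * f v) := by
          nlinarith [norm_nonneg u, norm_nonneg v, mul_nonneg (norm_nonneg u) h0]
  -- entropy integrability
  have hent_f_eq : (fun v => kinEntropy n m γ (f v) v)
      = fun v : EuclideanSpace ℝ (Fin n) => (m/2) * (‖v‖^2 * f v) + (b/p) * (f v ^ p) := by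
    funext v
    show m / 2 * ‖v‖ ^ 2 * f v + b * (f v ^ p / p) = _
    ring
  have hent_f : Integrable (fun v => kinEntropy n m γ (f v) v) := by
    rw [hent_f_eq]
    exact (hnormsqf.const_mul _).add (hfpow.const_mul _)
  have hent_M_eq : (fun v => kinEntropy n m γ (M v) v)
      = fun v : EuclideanSpace ℝ (Fin n) => (m/2) * (‖v‖^2 * M v) + (b/p) * (M v ^ p) := by
    funext v
    show m / 2 * ‖v‖ ^ 2 * M v + b * (M v ^ p / p) = _
    ring
  have hent_M : Integrable (fun v => kinEntropy n m γ (M v) v) := by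
    rw [hent_M_eq]
    exact ((maxwellian_normsq_integrable hm N u hd).const_mul _).add
      ((maxwellian_rpow_integrable hm N u hd hp).const_mul _)
  -- ψ integrability
  have hψf : Integrable (fun v => ψ v * f v) := by
    have : (fun v => ψ v * f v) = fun v : EuclideanSpace ℝ (Fin n) =>
        (B/2 - m * ‖u‖^2/2) * f v + m * (⟪u, v⟫ * f v) := by
      funext v; rw [hψdef]; ring
    rw [this]
    exact (hfint.const_mul _).add (hinner_f.const_mul _)
  have hψM : Integrable (fun v => ψ v * M v) := by
    apply Continuous.integrable_of_hasCompactSupport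
    · exact (((continuous_const.add ((innerSL ℝ u).continuous.const_smul m)).sub
        continuous_const).mul (maxwellian_continuous N u hd))
    · exact (maxwellian_hasCompactSupport hm N u hd).mul_left
  -- pointwise inequality
  have hpt : ∀ v, ψ v * (f v - M v) ≤ kinEntropy n m γ (f v) v - kinEntropy n m γ (M v) v :=
    fun v => entropy_pointwise hn hm hγ hγ' B u v (hf0 v)
  have key : ∫ v, ψ v * (f v - M v)
      ≤ ∫ v, (kinEntropy n m γ (f v) v - kinEntropy n m γ (M v) v) := by
    have h1 : Integrable (fun v => ψ v * (f v - M v)) := by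
      have : (fun v => ψ v * (f v - M v)) = fun v => ψ v * f v - ψ v * M v := by
        funext v; ring
      rw [this]; exact hψf.sub hψM
    exact integral_mono h1 (hent_f.sub hent_M) hpt
  -- compute ∫ ψ f
  have hIf : ∫ v, ψ v * f v = (B/2 - m * ‖u‖^2/2) * N
      + m * ⟪u, ∫ w : EuclideanSpace ℝ (Fin n), f w • w⟫ := by
    have e1 : (fun v => ψ v * f v) = fun v : EuclideanSpace ℝ (Fin n) =>
        (B/2 - m * ‖u‖^2/2) * f v + m * (⟪u, v⟫ * f v) := by
      funext v; rw [hψdef]; ring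
    rw [e1, integral_add (hfint.const_mul _) (hinner_f.const_mul _),
      integral_const_mul, integral_const_mul]
    congr 1
    congr 1
    have e2 : (fun v : EuclideanSpace ℝ (Fin n) => ⟪u, v⟫ * f v)
        = fun v : EuclideanSpace ℝ (Fin n) => ⟪u, f v • v⟫ := by
      funext v; rw [real_inner_smul_right]; ring
    rw [e2, integral_inner hsmulf u]
  -- compute ∫ ψ M
  have hIM : ∫ v, ψ v * M v = (B/2 - m * ‖u‖^2/2) * N + m * (N * ‖u‖^2) := by
    have hMint : Integrable M := maxwellian_integrable hm N u hd
    have hMsmul : Integrable (fun v : EuclideanSpace ℝ (Fin n) => M v • v) :=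
      maxwellian_smul_integrable hm N u hd
    have hinner_M : Integrable (fun v : EuclideanSpace ℝ (Fin n) => ⟪u, v⟫ * M v) := by
      apply Continuous.integrable_of_hasCompactSupport
      · exact (innerSL ℝ u).continuous.mul (maxwellian_continuous N u hd)
      · exact (maxwellian_hasCompactSupport hm N u hd).mul_left
    have e1 : (fun v => ψ v * M v) = fun v : EuclideanSpace ℝ (Fin n) =>
        (B/2 - m * ‖u‖^2/2) * M v + m * (⟪u, v⟫ * M v) := by
      funext v; rw [hψdef]; ring
    rw [e1, integral_add (hMint.const_mul _) (hinner_M.const_mul _),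
      integral_const_mul, integral_const_mul]
    rw [show (∫ v, M v) = N from maxwellian_integral hn hm hγ hγ' hN u]
    congr 1
    congr 1
    have e2 : (fun v : EuclideanSpace ℝ (Fin n) => ⟪u, v⟫ * M v)
        = fun v : EuclideanSpace ℝ (Fin n) => ⟪u, M v • v⟫ := by
      funext v; rw [real_inner_smul_right]; ring
    rw [e2, integral_inner hMsmul u, maxwellian_moment hn hm hγ hγ' hN u,
      real_inner_smul_right, real_inner_self_eq_norm_sq]
  -- assemble
  have hsplit1 : ∫ v, ψ v * (f v - M v) = (∫ v, ψ v * f v) - ∫ v, ψ v * M v := by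
    have : (fun v => ψ v * (f v - M v)) = fun v => ψ v * f v - ψ v * M v := by
      funext v; ring
    rw [this, integral_sub hψf hψM]
  have hsplit2 : ∫ v, (kinEntropy n m γ (f v) v - kinEntropy n m γ (M v) v)
      = (∫ v, kinEntropy n m γ (f v) v) - ∫ v, kinEntropy n m γ (M v) v :=
    integral_sub hent_f hent_M
  rw [hsplit1, hsplit2, hIf, hIM] at key
  linarith [key]
end

/-- Entropy minimization principle: for nonnegative integrable distributions
`f₁, f₂` with number densities `Nᵢ = ∫ fᵢ` and common bulk velocity
`u = (ν₁m₁∫vf₁ + ν₂m₂∫vf₂)/(ν₁m₁N₁ + ν₂m₂N₂)`, the total kinetic entropy of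
`(f₁, f₂)` dominates that of the truncated Maxwellians `(M₁[N₁,u], M₂[N₂,u])`. -/
theorem total_entropy_minimization (n : ℕ) (hn : 1 ≤ n) (ν₁ ν₂ m₁ m₂ γ₁ γ₂ : ℝ)
    (hν₁ : 0 < ν₁) (hν₂ : 0 < ν₂) (hm₁ : 0 < m₁) (hm₂ : 0 < m₂)
    (hγ₁ : 1 < γ₁) (hγ₁' : γ₁ < ((n : ℝ) + 2) / n)
    (hγ₂ : 1 < γ₂) (hγ₂' : γ₂ < ((n : ℝ) + 2) / n)
    (f₁ f₂ : EuclideanSpace ℝ (Fin n) → ℝ)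
    (hf₁meas : Measurable f₁) (hf₂meas : Measurable f₂)
    (hf₁0 : ∀ v, 0 ≤ f₁ v) (hf₂0 : ∀ v, 0 ≤ f₂ v)
    (hf₁int : Integrable fun v : EuclideanSpace ℝ (Fin n) => (1 + ‖v‖ ^ 2) * f₁ v)
    (hf₂int : Integrable fun v : EuclideanSpace ℝ (Fin n) => (1 + ‖v‖ ^ 2) * f₂ v)
    (hf₁pow : Integrable fun v : EuclideanSpace ℝ (Fin n) => f₁ v ^ (1 + 2 / dExp n γ₁))
    (hf₂pow : Integrable fun v : EuclideanSpace ℝ (Fin n) => f₂ v ^ (1 + 2 / dExp n γ₂))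
    (hpos : 0 < ν₁ * m₁ * (∫ v : EuclideanSpace ℝ (Fin n), f₁ v)
        + ν₂ * m₂ * ∫ v : EuclideanSpace ℝ (Fin n), f₂ v) :
    ν₁ * (∫ v : EuclideanSpace ℝ (Fin n), kinEntropy n m₁ γ₁ (f₁ v) v)
      + ν₂ * (∫ v : EuclideanSpace ℝ (Fin n), kinEntropy n m₂ γ₂ (f₂ v) v) ≥
    ν₁ * (∫ v : EuclideanSpace ℝ (Fin n),
        kinEntropy n m₁ γ₁
          (maxwellian n m₁ γ₁ (∫ w : EuclideanSpace ℝ (Fin n), f₁ w)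
            ((ν₁ * m₁ * (∫ w : EuclideanSpace ℝ (Fin n), f₁ w)
                + ν₂ * m₂ * (∫ w : EuclideanSpace ℝ (Fin n), f₂ w))⁻¹ •
              ((ν₁ * m₁) • (∫ w : EuclideanSpace ℝ (Fin n), f₁ w • w)
                + (ν₂ * m₂) • ∫ w : EuclideanSpace ℝ (Fin n), f₂ w • w)) v) v)
      + ν₂ * ∫ v : EuclideanSpace ℝ (Fin n),
          kinEntropy n m₂ γ₂
            (maxwellian n m₂ γ₂ (∫ w : EuclideanSpace ℝ (Fin n), f₂ w)
              ((ν₁ * m₁ * (∫ w : EuclideanSpace ℝ (Fin n), f₁ w)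
                  + ν₂ * m₂ * (∫ w : EuclideanSpace ℝ (Fin n), f₂ w))⁻¹ •
                ((ν₁ * m₁) • (∫ w : EuclideanSpace ℝ (Fin n), f₁ w • w)
                  + (ν₂ * m₂) • ∫ w : EuclideanSpace ℝ (Fin n), f₂ w • w)) v) v := by
  set N₁ : ℝ := ∫ v : EuclideanSpace ℝ (Fin n), f₁ v with hN₁
  set N₂ : ℝ := ∫ v : EuclideanSpace ℝ (Fin n), f₂ v with hN₂
  set I₁ : EuclideanSpace ℝ (Fin n) := ∫ w : EuclideanSpace ℝ (Fin n), f₁ w • w with hI₁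
  set I₂ : EuclideanSpace ℝ (Fin n) := ∫ w : EuclideanSpace ℝ (Fin n), f₂ w • w with hI₂
  set S : ℝ := ν₁ * m₁ * N₁ + ν₂ * m₂ * N₂ with hS
  set u : EuclideanSpace ℝ (Fin n) := S⁻¹ • ((ν₁ * m₁) • I₁ + (ν₂ * m₂) • I₂) with hu
  have hb1 := species_bound hn hm₁ hγ₁ hγ₁' f₁ hf₁meas hf₁0 hf₁int hf₁pow u
  have hb2 := species_bound hn hm₂ hγ₂ hγ₂' f₂ hf₂meas hf₂0 hf₂int hf₂pow u
  have hzero : ν₁ * (m₁ * (⟪u, I₁⟫ - N₁ * ‖u‖ ^ 2))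
      + ν₂ * (m₂ * (⟪u, I₂⟫ - N₂ * ‖u‖ ^ 2)) = 0 := by
    have hw : (ν₁ * m₁) • I₁ + (ν₂ * m₂) • I₂ = S • u := by
      rw [hu, smul_inv_smul₀ (ne_of_gt hpos)]
    have h1 : ⟪u, (ν₁ * m₁) • I₁ + (ν₂ * m₂) • I₂⟫
        = ν₁ * m₁ * ⟪u, I₁⟫ + ν₂ * m₂ * ⟪u, I₂⟫ := by
      rw [inner_add_right, real_inner_smul_right, real_inner_smul_right]
    have h2 : ⟪u, S • u⟫ = S * ‖u‖ ^ 2 := by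
      rw [real_inner_smul_right, real_inner_self_eq_norm_sq]
    rw [hw, h2] at h1
    rw [hS] at h1
    ring_nf
    ring_nf at h1
    linarith [h1]
  have k1 := mul_le_mul_of_nonneg_left hb1 hν₁.le
  have k2 := mul_le_mul_of_nonneg_left hb2 hν₂.le
  rw [ge_iff_le]
  calc ν₁ * (∫ v : EuclideanSpace ℝ (Fin n),
        kinEntropy n m₁ γ₁ (maxwellian n m₁ γ₁ N₁ u v) v)
      + ν₂ * ∫ v : EuclideanSpace ℝ (Fin n),
        kinEntropy n m₂ γ₂ (maxwellian n m₂ γ₂ N₂ u v) v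
      ≤ ν₁ * ((∫ v : EuclideanSpace ℝ (Fin n), kinEntropy n m₁ γ₁ (f₁ v) v)
          - m₁ * (⟪u, I₁⟫ - N₁ * ‖u‖ ^ 2))
        + ν₂ * ((∫ v : EuclideanSpace ℝ (Fin n), kinEntropy n m₂ γ₂ (f₂ v) v)
          - m₂ * (⟪u, I₂⟫ - N₂ * ‖u‖ ^ 2)) := by
        exact add_le_add k1 k2
    _ = ν₁ * (∫ v : EuclideanSpace ℝ (Fin n), kinEntropy n m₁ γ₁ (f₁ v) v)
        + ν₂ * (∫ v : EuclideanSpace ℝ (Fin n), kinEntropy n m₂ γ₂ (f₂ v) v)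
        - (ν₁ * (m₁ * (⟪u, I₁⟫ - N₁ * ‖u‖ ^ 2))
          + ν₂ * (m₂ * (⟪u, I₂⟫ - N₂ * ‖u‖ ^ 2))) := by ring
    _ = _ := by rw [hzero]; ring
end
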